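/- Let $X$ and $Y$ be independent random vectors in $\mathbb{R}^k$ and $\mathbb{R}^l$ respectively, let $X'$ be an independent copy of $X$ and $Y'$ an independent copy of $Y$ (all mutually independent), and let $f:\mathbb{R}^{k+l}\to\mathbb{R}$ be a measurable function. Then for any $a\in\mathbb{R}$: $\mathbb{P}(f(X,Y)=a)^4 \le \mathbb{P}\big(f(X,Y)-f(X,Y')-f(X',Y)+f(X',Y')=0\big)$. -/

import Mathlib

open MeasureTheory ProbabilityTheory
open scoped ENNReal

/-- Decoupling: if `X, X', Y, Y'` are mutually independent random vectors with
`X' ~ X` and `Y' ~ Y`, and `f` is measurable, then for any `a ∈ ℝ`,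
`P(f(X,Y) = a)⁴ ≤ P(f(X,Y) - f(X,Y') - f(X',Y) + f(X',Y') = 0)`. -/

lemma sq_lintegral_le' {γ : Type*} [MeasurableSpace γ] (μ : Measure γ) [IsProbabilityMeasure μ]
    {g : γ → ℝ≥0∞} (hg : AEMeasurable g μ) :
    (∫⁻ x, g x ∂μ) ^ 2 ≤ ∫⁻ x, g x ^ 2 ∂μ := by
  have hpq : (2:ℝ).HolderConjugate 2 := ⟨by norm_num, by norm_num, by norm_num⟩
  have h := ENNReal.lintegral_mul_le_Lp_mul_Lq μ hpq hg
    (aemeasurable_const (b := (1:ℝ≥0∞)))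
  simp only [Pi.mul_apply, mul_one, ENNReal.one_rpow, lintegral_one, measure_univ,
    one_mul] at h
  calc (∫⁻ x, g x ∂μ) ^ 2 ≤ ((∫⁻ x, g x ^ (2:ℝ) ∂μ) ^ (1/(2:ℝ))) ^ 2 :=
        pow_le_pow_left₀ zero_le h 2
    _ = ∫⁻ x, g x ^ 2 ∂μ := by
        rw [← ENNReal.rpow_natCast _ 2, ← ENNReal.rpow_mul]
        norm_num

theorem stmt_5 (k l : ℕ)
    (Ω : Type*) [MeasureSpace Ω] [IsProbabilityMeasure (ℙ : Measure Ω)]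
    (X X' : Ω → (Fin k → ℝ)) (Y Y' : Ω → (Fin l → ℝ))
    (hX : Measurable X) (hX' : Measurable X') (hY : Measurable Y) (hY' : Measurable Y')
    (f : (Fin k → ℝ) → (Fin l → ℝ) → ℝ)
    (hf : Measurable (fun q : (Fin k → ℝ) × (Fin l → ℝ) => f q.1 q.2))
    (hXX' : IndepFun X X' ℙ)
    (hYY' : IndepFun Y Y' ℙ)
    (hpair : IndepFun (fun ω => (X ω, X' ω)) (fun ω => (Y ω, Y' ω)) ℙ)
    (hidX : IdentDistrib X' X ℙ ℙ) (hidY : IdentDistrib Y' Y ℙ ℙ) (a : ℝ) :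
    (ℙ {ω | f (X ω) (Y ω) = a}).toReal ^ 4 ≤
      (ℙ {ω | f (X ω) (Y ω) - f (X ω) (Y' ω) - f (X' ω) (Y ω) + f (X' ω) (Y' ω) = 0}).toReal := by
  classical
  set μ : Measure (Fin k → ℝ) := Measure.map X ℙ with hμ
  set ν : Measure (Fin l → ℝ) := Measure.map Y ℙ with hν
  haveI : IsProbabilityMeasure μ := Measure.isProbabilityMeasure_map hX.aemeasurable
  haveI : IsProbabilityMeasure ν := Measure.isProbabilityMeasure_map hY.aemeasurable
  set χ : (Fin k → ℝ) → (Fin l → ℝ) → ℝ≥0∞ := fun x y => if f x y = a then 1 else 0 with hχ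
  have hsm : MeasurableSet {q : (Fin k → ℝ) × (Fin l → ℝ) | f q.1 q.2 = a} := hf (measurableSet_singleton a)
  have hχm : Measurable (fun q : (Fin k → ℝ) × (Fin l → ℝ) => χ q.1 q.2) :=
    Measurable.ite hsm measurable_const measurable_const
  -- laws
  have hXX'map : Measure.map (fun ω => (X ω, X' ω)) ℙ = μ.prod μ := by
    rw [(indepFun_iff_map_prod_eq_prod_map_map hX.aemeasurable hX'.aemeasurable).mp hXX',
      hidX.map_eq]
  have hYY'map : Measure.map (fun ω => (Y ω, Y' ω)) ℙ = ν.prod ν := by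
    rw [(indepFun_iff_map_prod_eq_prod_map_map hY.aemeasurable hY'.aemeasurable).mp hYY',
      hidY.map_eq]
  have hTmap : Measure.map (fun ω => ((X ω, X' ω), (Y ω, Y' ω))) ℙ = (μ.prod μ).prod (ν.prod ν) := by
    rw [(indepFun_iff_map_prod_eq_prod_map_map ((hX.prodMk hX').aemeasurable)
      ((hY.prodMk hY').aemeasurable)).mp hpair, hXX'map, hYY'map]
  have hXY : IndepFun X Y ℙ := hpair.comp measurable_fst measurable_fst
  have hXYmap : Measure.map (fun ω => (X ω, Y ω)) ℙ = μ.prod ν :=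
    (indepFun_iff_map_prod_eq_prod_map_map hX.aemeasurable hY.aemeasurable).mp hXY
  -- P as an integral
  set m : (Fin l → ℝ) → ℝ≥0∞ := fun y => ∫⁻ x, χ x y ∂μ with hm
  have hmm : Measurable m := hχm.lintegral_prod_left'
  set P : ℝ≥0∞ := ℙ {ω | f (X ω) (Y ω) = a} with hP
  have hPs : P = (μ.prod ν) {q : (Fin k → ℝ) × (Fin l → ℝ) | f q.1 q.2 = a} := by
    rw [hP, ← hXYmap, Measure.map_apply (hX.prodMk hY) hsm]
    rfl
  have hPint : P = ∫⁻ y, m y ∂ν := by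
    rw [hPs, ← lintegral_indicator_one hsm]
    have : ∀ q : (Fin k → ℝ) × (Fin l → ℝ), ({q : (Fin k → ℝ) × (Fin l → ℝ) | f q.1 q.2 = a}).indicator 1 q = χ q.1 q.2 := by
      intro q
      by_cases h : f q.1 q.2 = a <;> simp [Set.indicator_apply, h, hχ]
    rw [lintegral_congr this, lintegral_prod _ hχm.aemeasurable,
      lintegral_lintegral_swap hχm.aemeasurable]
  -- measurability of the four coordinate maps
  have m11 : Measurable (fun p : ((Fin k → ℝ) × (Fin k → ℝ)) × ((Fin l → ℝ) × (Fin l → ℝ)) => f p.1.1 p.2.1) :=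
    hf.comp ((measurable_fst.fst).prodMk (measurable_snd.fst))
  have m12 : Measurable (fun p : ((Fin k → ℝ) × (Fin k → ℝ)) × ((Fin l → ℝ) × (Fin l → ℝ)) => f p.1.1 p.2.2) :=
    hf.comp ((measurable_fst.fst).prodMk (measurable_snd.snd))
  have m21 : Measurable (fun p : ((Fin k → ℝ) × (Fin k → ℝ)) × ((Fin l → ℝ) × (Fin l → ℝ)) => f p.1.2 p.2.1) :=
    hf.comp ((measurable_fst.snd).prodMk (measurable_snd.fst))
  have m22 : Measurable (fun p : ((Fin k → ℝ) × (Fin k → ℝ)) × ((Fin l → ℝ) × (Fin l → ℝ)) => f p.1.2 p.2.2) :=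
    hf.comp ((measurable_fst.snd).prodMk (measurable_snd.snd))
  -- the target set
  set S : Set (((Fin k → ℝ) × (Fin k → ℝ)) × ((Fin l → ℝ) × (Fin l → ℝ))) :=
    {p | f p.1.1 p.2.1 - f p.1.1 p.2.2 - f p.1.2 p.2.1 + f p.1.2 p.2.2 = 0} with hS
  have hSm : MeasurableSet S :=
    (((m11.sub m12).sub m21).add m22) (measurableSet_singleton 0)
  have hRHS : ℙ {ω | f (X ω) (Y ω) - f (X ω) (Y' ω) - f (X' ω) (Y ω) + f (X' ω) (Y' ω) = 0}
      = ((μ.prod μ).prod (ν.prod ν)) S := by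
    rw [← hTmap, Measure.map_apply ((hX.prodMk hX').prodMk (hY.prodMk hY')) hSm]
    rfl
  -- the quadruple-equality set
  set E : Set (((Fin k → ℝ) × (Fin k → ℝ)) × ((Fin l → ℝ) × (Fin l → ℝ))) :=
    {p | f p.1.1 p.2.1 = a ∧ f p.1.1 p.2.2 = a ∧ f p.1.2 p.2.1 = a ∧ f p.1.2 p.2.2 = a} with hE
  have hEm : MeasurableSet E := by
    have h1 := m11 (measurableSet_singleton a)
    have h2 := m12 (measurableSet_singleton a)
    have h3 := m21 (measurableSet_singleton a)
    have h4 := m22 (measurableSet_singleton a)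
    exact h1.inter (h2.inter (h3.inter h4))
  have hES : E ⊆ S := by
    rintro p ⟨h1, h2, h3, h4⟩
    simp only [hS, Set.mem_setOf_eq, h1, h2, h3, h4]
    ring
  -- ((μ.prod μ).prod (ν.prod ν)) E as a quadruple integral
  set g : (Fin k → ℝ) → (Fin k → ℝ) → ℝ≥0∞ := fun x x' => ∫⁻ y, χ x y * χ x' y ∂ν with hg
  have hprodχ : Measurable (fun q : ((Fin k → ℝ) × (Fin k → ℝ)) × (Fin l → ℝ) => χ q.1.1 q.2 * χ q.1.2 q.2) := by
    have a1 : Measurable (fun q : ((Fin k → ℝ) × (Fin k → ℝ)) × (Fin l → ℝ) => χ q.1.1 q.2) :=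
      hχm.comp ((measurable_fst.fst).prodMk measurable_snd)
    have a2 : Measurable (fun q : ((Fin k → ℝ) × (Fin k → ℝ)) × (Fin l → ℝ) => χ q.1.2 q.2) :=
      hχm.comp ((measurable_fst.snd).prodMk measurable_snd)
    exact a1.mul a2
  have hgm : Measurable (fun w : (Fin k → ℝ) × (Fin k → ℝ) => g w.1 w.2) := hprodχ.lintegral_prod_right'
  have hF1 : Measurable (fun p : ((Fin k → ℝ) × (Fin k → ℝ)) × ((Fin l → ℝ) × (Fin l → ℝ)) => χ p.1.1 p.2.1) :=
    hχm.comp ((measurable_fst.fst).prodMk (measurable_snd.fst))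
  have hF2 : Measurable (fun p : ((Fin k → ℝ) × (Fin k → ℝ)) × ((Fin l → ℝ) × (Fin l → ℝ)) => χ p.1.1 p.2.2) :=
    hχm.comp ((measurable_fst.fst).prodMk (measurable_snd.snd))
  have hF3 : Measurable (fun p : ((Fin k → ℝ) × (Fin k → ℝ)) × ((Fin l → ℝ) × (Fin l → ℝ)) => χ p.1.2 p.2.1) :=
    hχm.comp ((measurable_fst.snd).prodMk (measurable_snd.fst))
  have hF4 : Measurable (fun p : ((Fin k → ℝ) × (Fin k → ℝ)) × ((Fin l → ℝ) × (Fin l → ℝ)) => χ p.1.2 p.2.2) :=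
    hχm.comp ((measurable_fst.snd).prodMk (measurable_snd.snd))
  have hFm : Measurable (fun p : ((Fin k → ℝ) × (Fin k → ℝ)) × ((Fin l → ℝ) × (Fin l → ℝ)) =>
      (χ p.1.1 p.2.1 * χ p.1.2 p.2.1) * (χ p.1.1 p.2.2 * χ p.1.2 p.2.2)) :=
    (hF1.mul hF3).mul (hF2.mul hF4)
  have hEint : ((μ.prod μ).prod (ν.prod ν)) E = ∫⁻ w, (g w.1 w.2) ^ 2 ∂(μ.prod μ) := by
    rw [← lintegral_indicator_one hEm]
    have hind : ∀ p : ((Fin k → ℝ) × (Fin k → ℝ)) × ((Fin l → ℝ) × (Fin l → ℝ)),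
        E.indicator 1 p = (χ p.1.1 p.2.1 * χ p.1.2 p.2.1) * (χ p.1.1 p.2.2 * χ p.1.2 p.2.2) := by
      intro p
      by_cases h1 : f p.1.1 p.2.1 = a <;> by_cases h2 : f p.1.1 p.2.2 = a <;>
        by_cases h3 : f p.1.2 p.2.1 = a <;> by_cases h4 : f p.1.2 p.2.2 = a <;>
        simp [Set.indicator_apply, hE, hχ, h1, h2, h3, h4]
    rw [lintegral_congr hind, lintegral_prod _ hFm.aemeasurable]
    refine lintegral_congr fun w => ?_
    have : ∫⁻ z : (Fin l → ℝ) × (Fin l → ℝ), (χ w.1 z.1 * χ w.2 z.1) * (χ w.1 z.2 * χ w.2 z.2) ∂(ν.prod ν)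
        = (∫⁻ y, χ w.1 y * χ w.2 y ∂ν) * (∫⁻ y, χ w.1 y * χ w.2 y ∂ν) := by
      exact lintegral_prod_mul
        ((hχm.comp (measurable_const.prodMk measurable_id)).mul
          (hχm.comp (measurable_const.prodMk measurable_id))).aemeasurable
        ((hχm.comp (measurable_const.prodMk measurable_id)).mul
          (hχm.comp (measurable_const.prodMk measurable_id))).aemeasurable
    rw [this, ← sq]
  -- first Cauchy–Schwarz
  have hCS1 : (∫⁻ w, g w.1 w.2 ∂(μ.prod μ)) ^ 2 ≤ ((μ.prod μ).prod (ν.prod ν)) E := by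
    rw [hEint]
    exact sq_lintegral_le' (μ.prod μ) hgm.aemeasurable
  -- compute ∫ g over μ × μ
  have hgint : ∫⁻ w, g w.1 w.2 ∂(μ.prod μ) = ∫⁻ y, (m y) ^ 2 ∂ν := by
    have hswap : ∫⁻ w, ∫⁻ y, χ w.1 y * χ w.2 y ∂ν ∂(μ.prod μ)
        = ∫⁻ y, ∫⁻ w, χ w.1 y * χ w.2 y ∂(μ.prod μ) ∂ν :=
      lintegral_lintegral_swap hprodχ.aemeasurable
    rw [show (fun w : (Fin k → ℝ) × (Fin k → ℝ) => g w.1 w.2) = fun w => ∫⁻ y, χ w.1 y * χ w.2 y ∂ν from rfl, hswap]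
    refine lintegral_congr fun y => ?_
    have : ∫⁻ w : (Fin k → ℝ) × (Fin k → ℝ), χ w.1 y * χ w.2 y ∂(μ.prod μ) = (∫⁻ x, χ x y ∂μ) * (∫⁻ x, χ x y ∂μ) :=
      lintegral_prod_mul (hχm.comp (measurable_id.prodMk measurable_const)).aemeasurable
        (hχm.comp (measurable_id.prodMk measurable_const)).aemeasurable
    rw [this, ← sq]
  -- second Cauchy–Schwarz
  have hCS2 : P ^ 2 ≤ ∫⁻ w, g w.1 w.2 ∂(μ.prod μ) := by
    rw [hgint, hPint]
    exact sq_lintegral_le' ν hmm.aemeasurable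
  -- combine
  have hmain : P ^ 4 ≤ ((μ.prod μ).prod (ν.prod ν)) S := by
    calc P ^ 4 = (P ^ 2) ^ 2 := by ring
      _ ≤ (∫⁻ w, g w.1 w.2 ∂(μ.prod μ)) ^ 2 := pow_le_pow_left₀ zero_le hCS2 2
      _ ≤ ((μ.prod μ).prod (ν.prod ν)) E := hCS1
      _ ≤ ((μ.prod μ).prod (ν.prod ν)) S := measure_mono hES
  rw [hRHS]
  have hfin : ((μ.prod μ).prod (ν.prod ν)) S ≠ ⊤ := by
    exact measure_ne_top _ _
  calc (ℙ {ω | f (X ω) (Y ω) = a}).toReal ^ 4 = (P ^ 4).toReal := by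
        rw [ENNReal.toReal_pow, hP]
    _ ≤ (((μ.prod μ).prod (ν.prod ν)) S).toReal := ENNReal.toReal_mono hfin hmain
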